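/- Clamp of an integer counter via three-way table: for any integer s with −(L−1) ≤ s ≤ 2L−1, the number of output spikes produced by running L timesteps of thresholded subtraction from initial potential s·θ/L with threshold θ/L equals L if s ≥ L, equals s if 0 < s < L, and equals 0 if s ≤ 0. -/

import Mathlib

/-- Membrane potential under thresholded subtraction. -/
noncomputable def stage3V (θs : ℝ) (init : ℝ) : ℕ → ℝ
  | 0 => init
  | t + 1 => stage3V θs init t - (if θs ≤ stage3V θs init t then θs else 0)

lemma stage3V_closed (θs : ℝ) (hθs : 0 < θs) (s : ℤ) (t : ℕ) :
    stage3V θs ((s : ℝ) * θs) t = ((s - min (t : ℤ) (max s 0) : ℤ) : ℝ) * θs := by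
  induction t with
  | zero => simp [stage3V]
  | succ t ih =>
    rw [stage3V, ih]
    set c : ℤ := s - min (t : ℤ) (max s 0) with hc
    have key : (θs ≤ (c : ℝ) * θs) ↔ 1 ≤ c := by
      rw [le_mul_iff_one_le_left hθs]
      exact_mod_cast Iff.rfl
    by_cases h1 : 1 ≤ c
    · rw [if_pos (key.mpr h1)]
      have : s - min ((t : ℤ) + 1) (max s 0) = c - 1 := by omega
      push_cast [this]
      ring
    · rw [if_neg (fun h => h1 (key.mp h))]
      have : s - min ((t : ℤ) + 1) (max s 0) = c := by omega
      push_cast [this]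
      ring

theorem clamp_three_way (θ : ℝ) (hθ : 0 < θ) (L : ℕ) (hL : 0 < L) (s : ℤ)
    (hlo : -((L : ℤ) - 1) ≤ s) (hhi : s ≤ 2 * L - 1) :
    ((L : ℤ) ≤ s →
      (∑ t ∈ Finset.range L,
        (if θ / L ≤ stage3V (θ / L) ((s : ℝ) * (θ / L)) t then (1:ℤ) else 0)) = L) ∧
    (0 < s → s < L →
      (∑ t ∈ Finset.range L,
        (if θ / L ≤ stage3V (θ / L) ((s : ℝ) * (θ / L)) t then (1:ℤ) else 0)) = s) ∧
    (s ≤ 0 →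
      (∑ t ∈ Finset.range L,
        (if θ / L ≤ stage3V (θ / L) ((s : ℝ) * (θ / L)) t then (1:ℤ) else 0)) = 0) := by
  have hθs : 0 < θ / L := div_pos hθ (by exact_mod_cast hL)
  have key : ∀ t : ℕ, (θ / L ≤ stage3V (θ / L) ((s : ℝ) * (θ / L)) t) ↔
      1 ≤ s - min (t : ℤ) (max s 0) := by
    intro t
    rw [stage3V_closed _ hθs]
    rw [le_mul_iff_one_le_left hθs]
    exact_mod_cast Iff.rfl
  have sum_eq : ∀ t : ℕ,
      (if θ / L ≤ stage3V (θ / L) ((s : ℝ) * (θ / L)) t then (1:ℤ) else 0) =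
      (if (t : ℤ) < s then (1:ℤ) else 0) := by
    intro t
    by_cases h : (t : ℤ) < s
    · rw [if_pos h, if_pos ((key t).mpr (by omega))]
    · rw [if_neg h, if_neg (fun hh => h (by have := (key t).mp hh; omega))]
  simp only [sum_eq]
  refine ⟨fun hLs => ?_, fun h0 hsL => ?_, fun hs0 => ?_⟩
  · rw [Finset.sum_congr rfl (fun t ht => if_pos (by
      have := Finset.mem_range.mp ht; omega))]
    simp
  · rw [Finset.sum_boole]
    have : Finset.filter (fun t : ℕ => (t : ℤ) < s) (Finset.range L) =
        Finset.range s.toNat := by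
      ext t
      simp only [Finset.mem_filter, Finset.mem_range]
      omega
    rw [this]
    simp
    omega
  · rw [Finset.sum_congr rfl (fun t ht => if_neg (by omega))]
    simp
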